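/- arXiv:1409.1122 — 3 statements merged into one kernel-verified Lean document; each statement's English description precedes it below -/
import Mathlib

section
/- Let p > 0, σ_x > 0, σ_n > 0, K, M ∈ ℕ. Let x be a random vector in ℝ^K with i.i.d. entries N(0, σ_x²) and n a random vector in ℝ^M with i.i.d. entries N(0, σ_n²), independent of x. Then the mean-squared-error function J : ℝ^{M×K} → ℝ₊ defined by J(S) = E[ ( Σ_{k=1}^K |x_k|^p − ‖S φ_p(x) + n‖₂² )² ] attains a (global) minimum on ℝ^{M×K}, i.e. there exists S* ∈ ℝ^{M×K} with J(S*) ≤ J(S) for all S ∈ ℝ^{M×K}. -/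
open Matrix MeasureTheory ProbabilityTheory

/-- Pre-processing map `φ_p : ℝ^K → ℝ^K`, `(φ_p x)_k = |x_k|^(p/2)`. -/
noncomputable def phi (p : ℝ) {K : ℕ} (x : Fin K → ℝ) : Fin K → ℝ :=
  fun k => |x k| ^ (p / 2)

/-- Law of a random vector in `ℝ^K` with i.i.d. entries `N(0, σ²)`. -/
noncomputable def gaussPi (K : ℕ) (σ : ℝ) : Measure (Fin K → ℝ) :=
  Measure.pi fun _ => gaussianReal 0 (σ ^ 2).toNNReal

/-- Joint law of independent `x` (i.i.d. `N(0,σx²)` entries) and `n` (i.i.d. `N(0,σn²)` entries). -/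
noncomputable def jointMeas (K M : ℕ) (σx σn : ℝ) :
    Measure ((Fin K → ℝ) × (Fin M → ℝ)) :=
  (gaussPi K σx).prod (gaussPi M σn)

/-- The MSE objective `J(S) = E[(Σₖ |x_k|^p − ‖S φ_p(x) + n‖₂²)²]`. -/
noncomputable def J (p σx σn : ℝ) (K M : ℕ) (S : Matrix (Fin M) (Fin K) ℝ) : ℝ :=
  ∫ z, ((∑ k, |z.1 k| ^ p) - ∑ m, ((S *ᵥ phi p z.1 + z.2) m) ^ 2) ^ 2
    ∂(jointMeas K M σx σn)

open scoped ENNReal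
open NNReal MeasureTheory.Measure Real Filter

namespace StmtAux


theorem integrable_pi_prod {n : ℕ} {E : Fin n → Type*} [∀ i, MeasurableSpace (E i)]
    (ν : ∀ i, Measure (E i)) [∀ i, SigmaFinite (ν i)] {f : (i : Fin n) → E i → ℝ}
    (hf : ∀ i, Integrable (f i) (ν i)) :
    Integrable (fun (x : (i : Fin n) → E i) ↦ ∏ i, f i (x i)) (Measure.pi ν) := by
  induction n with
  | zero => simp only [Finset.univ_eq_empty, Finset.prod_empty,
      integrable_const_iff, one_ne_zero, pi_empty_univ, ENNReal.one_lt_top, or_true]; exact Or.inr ⟨by rw [pi_empty_univ]; exact ENNReal.one_lt_top⟩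
  | succ n n_ih =>
      have := ((measurePreserving_piFinSuccAbove (fun i => ν i) 0).symm)
      rw [← this.integrable_comp_emb (MeasurableEquiv.measurableEmbedding _)]
      simp_rw [MeasurableEquiv.piFinSuccAbove_symm_apply, Fin.insertNthEquiv,
        Fin.prod_univ_succ, Fin.insertNth_zero]
      simp only [Fin.zero_succAbove, Function.comp_def, Fin.cons_zero, Fin.cons_succ]
      have : Integrable (fun (x : (j : Fin n) → E (Fin.succ j)) ↦ ∏ j, f (Fin.succ j) (x j))
          (Measure.pi fun j => ν (Fin.succ j)) := n_ih _ (fun i ↦ hf _)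
      exact Integrable.mul_prod (hf 0) this

theorem integral_pi_prod {n : ℕ} {E : Fin n → Type*} [∀ i, MeasurableSpace (E i)]
    (ν : ∀ i, Measure (E i)) [∀ i, SigmaFinite (ν i)] (f : (i : Fin n) → E i → ℝ) :
    ∫ x : (i : Fin n) → E i, ∏ i, f i (x i) ∂Measure.pi ν = ∏ i, ∫ x, f i x ∂ν i := by
  induction n with
  | zero =>
      simp [integral_const, pi_empty_univ, Measure.real]
  | succ n n_ih =>
      calc
        _ = ∫ x : E 0 × ((i : Fin n) → E (Fin.succ i)),
            f 0 x.1 * ∏ i : Fin n, f (Fin.succ i) (x.2 i)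
              ∂((ν 0).prod (Measure.pi fun i => ν (Fin.succ i))) := by
          rw [← ((measurePreserving_piFinSuccAbove (fun i => ν i) 0).symm).integral_comp']
          simp_rw [MeasurableEquiv.piFinSuccAbove_symm_apply, Fin.insertNthEquiv,
            Fin.prod_univ_succ, Fin.insertNth_zero, Equiv.coe_fn_mk, Fin.cons_succ,
            Fin.zero_succAbove, Fin.cons_zero]
          rfl
        _ = (∫ x, f 0 x ∂ν 0) * ∏ i : Fin n, ∫ x : E (Fin.succ i), f (Fin.succ i) x ∂ν _ := by
          rw [← n_ih _, ← integral_prod_mul]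
        _ = ∏ i, ∫ x, f i x ∂ν i := by rw [Fin.prod_univ_succ]



theorem abs_rpow_le_exp (s : ℝ) (hs : 0 ≤ s) (x : ℝ) : |x| ^ s ≤ Real.exp (s * |x|) := by
  rcases eq_or_ne x 0 with rfl | hx
  · calc |(0:ℝ)| ^ s ≤ 1 := by simpa using Real.zero_rpow_le_one s
      _ ≤ Real.exp (s * |(0:ℝ)|) := by simp
  · have hpos : 0 < |x| := abs_pos.mpr hx
    rw [Real.rpow_def_of_pos hpos]
    apply Real.exp_le_exp.mpr
    have hlog : Real.log |x| ≤ |x| :=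
      (Real.log_le_sub_one_of_pos hpos).trans (by linarith)
    nlinarith [mul_le_mul_of_nonneg_right hlog hs]

theorem integrable_abs_rpow_gauss {v : ℝ≥0} (hv : v ≠ 0) {s : ℝ} (hs : 0 ≤ s) :
    Integrable (fun t : ℝ => |t| ^ s) (gaussianReal 0 v) := by
  rw [gaussianReal_of_var_ne_zero _ hv,
    integrable_withDensity_iff (measurable_gaussianPDF _ _)
      (Filter.Eventually.of_forall fun x => ENNReal.ofReal_lt_top)]
  have hv' : (0:ℝ) < (v:ℝ) := by positivity
  have hb : (0:ℝ) < (2 * (v:ℝ))⁻¹ := by positivity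
  set b : ℝ := (2 * (v:ℝ))⁻¹ with hbdef
  set c₀ : ℝ := (Real.sqrt (2 * π * v))⁻¹ with hc₀
  have hc₀nonneg : 0 ≤ c₀ := by positivity
  have hfun : (fun x : ℝ => |x| ^ s * (gaussianPDF 0 v x).toReal)
      = fun x : ℝ => |x| ^ s * (c₀ * Real.exp (-b * x ^ 2)) := by
    funext x
    rw [gaussianPDF, ENNReal.toReal_ofReal (gaussianPDFReal_nonneg _ _ _), gaussianPDFReal]
    congr 2
    rw [sub_zero, hbdef]
    field_simp
  rw [hfun]
  have hint : Integrable (fun x : ℝ => (c₀ * Real.exp (s ^ 2 / (2 * b)))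
      * Real.exp (-(b/2) * x ^ 2)) volume :=
    (integrable_exp_neg_mul_sq (by positivity : (0:ℝ) < b/2)).const_mul _
  have hcont : Continuous fun x : ℝ => |x| ^ s * (c₀ * Real.exp (-b * x ^ 2)) := by
    refine (continuous_abs.rpow_const fun x => Or.inr hs).mul (continuous_const.mul ?_)
    exact Real.continuous_exp.comp ((continuous_const.mul (continuous_pow 2)))
  refine hint.mono' hcont.aestronglyMeasurable (Filter.Eventually.of_forall fun x => ?_)
  · have h1 : |x| ^ s ≤ Real.exp (s * |x|) := abs_rpow_le_exp s hs x
    have hxnn : (0:ℝ) ≤ |x| ^ s := Real.rpow_nonneg (abs_nonneg x) s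
    have hexp : Real.exp (s * |x|) * Real.exp (-b * x ^ 2)
        ≤ Real.exp (s ^ 2 / (2 * b)) * Real.exp (-(b/2) * x ^ 2) := by
      rw [← Real.exp_add, ← Real.exp_add]
      apply Real.exp_le_exp.mpr
      have ha : x ^ 2 = |x| ^ 2 := (sq_abs x).symm
      have key : s * |x| ≤ s ^ 2 / (2 * b) + (b / 2) * |x| ^ 2 := by
        rw [← sub_nonneg]
        have hid : s ^ 2 / (2 * b) + (b / 2) * |x| ^ 2 - s * |x|
            = (b * |x| - s) ^ 2 / (2 * b) := by
          field_simp; ring_nf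
        rw [hid]; positivity
      rw [ha]; linarith [key]
    have : ‖|x| ^ s * (c₀ * Real.exp (-b * x ^ 2))‖
        = |x| ^ s * Real.exp (-b * x ^ 2) * c₀ := by
      rw [Real.norm_eq_abs, abs_of_nonneg (by positivity)]; ring
    rw [this]
    calc |x| ^ s * Real.exp (-b * x ^ 2) * c₀
        ≤ Real.exp (s * |x|) * Real.exp (-b * x ^ 2) * c₀ := by
          apply mul_le_mul_of_nonneg_right _ hc₀nonneg
          exact mul_le_mul_of_nonneg_right h1 (Real.exp_nonneg _)
      _ ≤ Real.exp (s ^ 2 / (2 * b)) * Real.exp (-(b/2) * x ^ 2) * c₀ :=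
          mul_le_mul_of_nonneg_right hexp hc₀nonneg
      _ = c₀ * Real.exp (s ^ 2 / (2 * b)) * Real.exp (-(b/2) * x ^ 2) := by ring

variable {ν : Measure ℝ} [IsProbabilityMeasure ν] {n : ℕ}

theorem prod_eq_pair {g h : ℝ → ℝ} (k j : Fin n) (hkj : k ≠ j) (x : Fin n → ℝ) :
    (∏ i, ((if i = k then g (x i) else 1) * (if i = j then h (x i) else 1)))
      = g (x k) * h (x j) := by
  rw [Finset.prod_mul_distrib, Finset.prod_ite_eq' Finset.univ k (fun i => g (x i)),
    Finset.prod_ite_eq' Finset.univ j (fun i => h (x i))]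
  simp

theorem integrable_pair {g h : ℝ → ℝ} (hg : Integrable g ν) (hh : Integrable h ν)
    (k j : Fin n) (hkj : k ≠ j) :
    Integrable (fun x : Fin n → ℝ => g (x k) * h (x j)) (Measure.pi fun _ => ν) := by
  have := integrable_pi_prod (fun _ : Fin n => ν)
    (f := fun i t => (if i = k then g t else 1) * (if i = j then h t else 1)) ?_
  · exact this.congr (Filter.Eventually.of_forall fun x => prod_eq_pair k j hkj x)
  · intro i
    rcases eq_or_ne i k with rfl | hik
    · simp only [if_pos rfl, if_neg hkj, mul_one]; exact hg
    · rcases eq_or_ne i j with rfl | hij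
      · simp only [if_neg hik, if_pos rfl, one_mul]; exact hh
      · simp only [if_neg hik, if_neg hij, mul_one]; exact integrable_const 1

theorem integral_pair {g h : ℝ → ℝ} (hg : Integrable g ν) (hh : Integrable h ν)
    (k j : Fin n) (hkj : k ≠ j) :
    ∫ x : Fin n → ℝ, g (x k) * h (x j) ∂(Measure.pi fun _ => ν)
      = (∫ t, g t ∂ν) * ∫ t, h t ∂ν := by
  rw [← integral_congr_ae (Filter.Eventually.of_forall fun x => (prod_eq_pair k j hkj x))]
  rw [integral_pi_prod (fun _ => ν)
    (fun i t => (if i = k then g t else 1) * (if i = j then h t else 1))]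
  have hi : ∀ i : Fin n, (∫ t, ((if i = k then g t else 1) * (if i = j then h t else 1)) ∂ν)
      = (if i = k then ∫ t, g t ∂ν else 1) * (if i = j then ∫ t, h t ∂ν else 1) := by
    intro i
    rcases eq_or_ne i k with rfl | hik
    · simp [if_neg hkj]
    · rcases eq_or_ne i j with rfl | hij
      · simp [if_neg hik]
      · simp [if_neg hik, if_neg hij]
  rw [Finset.prod_congr rfl fun i _ => hi i, Finset.prod_mul_distrib,
    Finset.prod_ite_eq' Finset.univ k (fun _ => ∫ t, g t ∂ν),
    Finset.prod_ite_eq' Finset.univ j (fun _ => ∫ t, h t ∂ν)]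
  simp

theorem integrable_eval {g : ℝ → ℝ} (hg : Integrable g ν) (k : Fin n) :
    Integrable (fun x : Fin n → ℝ => g (x k)) (Measure.pi fun _ => ν) := by
  have := integrable_pi_prod (fun _ : Fin n => ν)
    (f := fun i t => if i = k then g t else 1) ?_
  · refine this.congr (Filter.Eventually.of_forall fun x => ?_)
    show (∏ i, if i = k then g (x i) else 1) = g (x k)
    rw [Finset.prod_ite_eq' Finset.univ k (fun i => g (x i))]; simp
  · intro i
    rcases eq_or_ne i k with rfl | hik
    · simpa using hg
    · simp only [if_neg hik]; exact integrable_const 1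

theorem integral_eval (g : ℝ → ℝ) (k : Fin n) :
    ∫ x : Fin n → ℝ, g (x k) ∂(Measure.pi fun _ => ν) = ∫ t, g t ∂ν := by
  have h1 : ∀ x : Fin n → ℝ, g (x k) = ∏ i, (if i = k then g (x i) else 1) := by
    intro x; rw [Finset.prod_ite_eq' Finset.univ k (fun i => g (x i))]; simp
  rw [integral_congr_ae (Filter.Eventually.of_forall h1),
    integral_pi_prod (fun _ => ν) (fun i t => if i = k then g t else 1)]
  have hi : ∀ i : Fin n, (∫ t, (if i = k then g t else 1) ∂ν)
      = if i = k then ∫ t, g t ∂ν else 1 := by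
    intro i; rcases eq_or_ne i k with rfl | hik <;> simp [*]
  rw [Finset.prod_congr rfl fun i _ => hi i,
    Finset.prod_ite_eq' Finset.univ k (fun _ => ∫ t, g t ∂ν)]
  simp

theorem sum_le_prod_one_add {ι : Type*} (s : Finset ι) (y : ι → ℝ) (hy : ∀ i, 0 ≤ y i) :
    ∑ i ∈ s, y i ≤ ∏ i ∈ s, (1 + y i) := by
  induction s using Finset.cons_induction with
  | empty => simp
  | cons a s ha ih =>
    rw [Finset.sum_cons, Finset.prod_cons]
    have hP : (1:ℝ) ≤ ∏ i ∈ s, (1 + y i) := by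
      calc (1:ℝ) = ∏ _i ∈ s, (1:ℝ) := by simp
        _ ≤ ∏ i ∈ s, (1 + y i) :=
          Finset.prod_le_prod (fun i _ => by norm_num) (fun i _ => by linarith [hy i])
    have := hy a
    nlinarith [ih]

theorem one_add_pow_le {y : ℝ} (hy : 0 ≤ y) (j : ℕ) : (1 + y) ^ j ≤ 2 ^ j * (1 + y ^ j) := by
  rcases le_total y 1 with h | h
  · calc (1 + y) ^ j ≤ 2 ^ j := by
          apply pow_le_pow_left₀ (by linarith) (by linarith)
      _ ≤ 2 ^ j * (1 + y ^ j) := by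
          nlinarith [pow_nonneg hy j, pow_pos (show (0:ℝ) < 2 by norm_num) j]
  · calc (1 + y) ^ j ≤ (2 * y) ^ j := by
          apply pow_le_pow_left₀ (by linarith) (by linarith)
      _ = 2 ^ j * y ^ j := by rw [mul_pow]
      _ ≤ 2 ^ j * (1 + y ^ j) := by
          nlinarith [pow_pos (show (0:ℝ) < 2 by norm_num) j]

theorem integrable_one_add_pow_gauss {v : ℝ≥0} (hv : v ≠ 0) {r : ℝ} (hr : 0 < r) (j : ℕ) :
    Integrable (fun t : ℝ => (1 + |t| ^ r) ^ j) (gaussianReal 0 v) := by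
  have hint : Integrable (fun t : ℝ => (2:ℝ) ^ j * (1 + |t| ^ (r * j))) (gaussianReal 0 v) :=
    (((integrable_const 1).add
      (integrable_abs_rpow_gauss hv (by positivity))).const_mul _)
  have hcont : Continuous fun t : ℝ => (1 + |t| ^ r) ^ j :=
    (continuous_const.add (continuous_abs.rpow_const fun x => Or.inr hr.le)).pow j
  refine hint.mono' hcont.aestronglyMeasurable (Filter.Eventually.of_forall fun t => ?_)
  have h0 : (0:ℝ) ≤ |t| ^ r := Real.rpow_nonneg (abs_nonneg t) r
  have h1 : (|t| ^ r) ^ j = |t| ^ (r * j) := by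
    rw [← Real.rpow_natCast (|t| ^ r) j, ← Real.rpow_mul (abs_nonneg t)]
  rw [Real.norm_eq_abs, abs_of_nonneg (by positivity)]
  calc (1 + |t| ^ r) ^ j ≤ 2 ^ j * (1 + (|t| ^ r) ^ j) := one_add_pow_le h0 j
    _ = 2 ^ j * (1 + |t| ^ (r * j)) := by rw [h1]

theorem integrable_pow_sum_gauss {v : ℝ≥0} (hv : v ≠ 0) {r : ℝ} (hr : 0 < r) (j n : ℕ) :
    Integrable (fun x : Fin n → ℝ => (∑ k, |x k| ^ r) ^ j)
      (Measure.pi fun _ : Fin n => gaussianReal 0 v) := by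
  have hint := integrable_pi_prod (fun _ : Fin n => gaussianReal 0 v)
    (f := fun _ t => (1 + |t| ^ r) ^ j) (fun _ => integrable_one_add_pow_gauss hv hr j)
  have hcont : Continuous fun x : Fin n → ℝ => (∑ k, |x k| ^ r) ^ j := by
    refine (Continuous.pow ?_ j)
    exact continuous_finset_sum _ fun k _ =>
      ((continuous_apply k).abs.rpow_const fun x => Or.inr hr.le)
  refine hint.mono' hcont.aestronglyMeasurable (Filter.Eventually.of_forall fun x => ?_)
  have h0 : ∀ k : Fin n, (0:ℝ) ≤ |x k| ^ r := fun k => Real.rpow_nonneg (abs_nonneg _) r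
  have hsum : (0:ℝ) ≤ ∑ k, |x k| ^ r := Finset.sum_nonneg fun k _ => h0 k
  rw [Real.norm_eq_abs, abs_of_nonneg (pow_nonneg hsum j)]
  calc (∑ k, |x k| ^ r) ^ j ≤ (∏ k, (1 + |x k| ^ r)) ^ j := by
        apply pow_le_pow_left₀ hsum (sum_le_prod_one_add _ _ h0)
    _ = ∏ k, (1 + |x k| ^ r) ^ j := by rw [Finset.prod_pow]



/-- `Af p x = ∑ k, |x k|^p`. -/
noncomputable def Af (p : ℝ) {K : ℕ} (x : Fin K → ℝ) : ℝ := ∑ k, |x k| ^ p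

/-- `Nf y = ∑ m, (y m)^2`. -/
noncomputable def Nf {M : ℕ} (y : Fin M → ℝ) : ℝ := ∑ m, (y m) ^ 2

/-- The integrand of `J`, with the matrix given as a plain function. -/
noncomputable def Ff (p : ℝ) {K M : ℕ} (T : Fin M → Fin K → ℝ)
    (z : (Fin K → ℝ) × (Fin M → ℝ)) : ℝ :=
  (Af p z.1 - ∑ m, ((∑ k, T m k * |z.1 k| ^ (p / 2)) + z.2 m) ^ 2) ^ 2

/-- Dominating function. -/
noncomputable def Df (p : ℝ) {K M : ℕ} (R : ℝ) (z : (Fin K → ℝ) × (Fin M → ℝ)) : ℝ :=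
  2 * (Af p z.1) ^ 2 + 16 * (M : ℝ) ^ 2 * R ^ 4 * (Af (p / 2) z.1) ^ 4 + 16 * (Nf z.2) ^ 2

theorem Af_nonneg (p : ℝ) {K : ℕ} (x : Fin K → ℝ) : 0 ≤ Af p x :=
  Finset.sum_nonneg fun k _ => Real.rpow_nonneg (abs_nonneg _) p

theorem Nf_nonneg {M : ℕ} (y : Fin M → ℝ) : 0 ≤ Nf y :=
  Finset.sum_nonneg fun m _ => sq_nonneg _

theorem Af_continuous (p : ℝ) (hp : 0 ≤ p) (K : ℕ) : Continuous (Af p (K := K)) :=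
  continuous_finset_sum _ fun k _ => ((continuous_apply k).abs.rpow_const fun _ => Or.inr hp)

theorem Nf_continuous (M : ℕ) : Continuous (Nf (M := M)) :=
  continuous_finset_sum _ fun m _ => (continuous_apply m).pow 2

theorem Ff_continuous (p : ℝ) (hp : 0 ≤ p) {K M : ℕ} (T : Fin M → Fin K → ℝ) :
    Continuous (Ff p T) := by
  apply Continuous.pow
  apply Continuous.sub ((Af_continuous p hp K).comp continuous_fst)
  refine continuous_finset_sum _ fun m _ => Continuous.pow ?_ 2
  refine Continuous.add (continuous_finset_sum _ fun k _ => ?_)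
    ((continuous_apply m).comp continuous_snd)
  exact continuous_const.mul
    ((((continuous_apply k).comp continuous_fst).abs).rpow_const fun _ => Or.inr (by linarith))

theorem Ff_continuous_in_T (p : ℝ) {K M : ℕ} (z : (Fin K → ℝ) × (Fin M → ℝ)) :
    Continuous fun T : Fin M → Fin K → ℝ => Ff p T z := by
  apply Continuous.pow
  apply Continuous.sub continuous_const
  refine continuous_finset_sum _ fun m _ => Continuous.pow ?_ 2
  refine Continuous.add (continuous_finset_sum _ fun k _ => ?_) continuous_const
  exact (continuous_apply_apply m k).mul continuous_const

theorem Ff_nonneg (p : ℝ) {K M : ℕ} (T : Fin M → Fin K → ℝ)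
    (z : (Fin K → ℝ) × (Fin M → ℝ)) : 0 ≤ Ff p T z := sq_nonneg _

theorem Ff_le_Df (p : ℝ) {K M : ℕ} {R : ℝ} (hR : 0 ≤ R) {T : Fin M → Fin K → ℝ}
    (hT : ∀ m k, |T m k| ≤ R) (z : (Fin K → ℝ) × (Fin M → ℝ)) :
    ‖Ff p T z‖ ≤ Df p R z := by
  obtain ⟨x, y⟩ := z
  set q : ℝ := p / 2 with hq
  set Φ : ℝ := Af q x with hΦ
  set A : ℝ := Af p x with hA
  set N : ℝ := Nf y with hN
  have hΦ0 : 0 ≤ Φ := Af_nonneg q x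
  have hA0 : 0 ≤ A := Af_nonneg p x
  have hN0 : 0 ≤ N := Nf_nonneg y
  have hφ0 : ∀ k, 0 ≤ |x k| ^ q := fun k => Real.rpow_nonneg (abs_nonneg _) q
  have hc : ∀ m, |∑ k, T m k * |x k| ^ q| ≤ R * Φ := by
    intro m
    calc |∑ k, T m k * |x k| ^ q| ≤ ∑ k, |T m k * |x k| ^ q| :=
          Finset.abs_sum_le_sum_abs _ _
      _ = ∑ k, |T m k| * |x k| ^ q := by
          refine Finset.sum_congr rfl fun k _ => ?_
          rw [abs_mul, abs_of_nonneg (hφ0 k)]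
      _ ≤ ∑ k, R * |x k| ^ q :=
          Finset.sum_le_sum fun k _ => mul_le_mul_of_nonneg_right (hT m k) (hφ0 k)
      _ = R * Φ := by rw [← Finset.mul_sum, hΦ, Af]
  set B : ℝ := ∑ m, ((∑ k, T m k * |x k| ^ q) + y m) ^ 2 with hBdef
  have hB0 : 0 ≤ B := Finset.sum_nonneg fun m _ => sq_nonneg _
  have hB : B ≤ 2 * M * (R * Φ) ^ 2 + 2 * N := by
    have h1 : ∀ m : Fin M, ((∑ k, T m k * |x k| ^ q) + y m) ^ 2
        ≤ 2 * (R * Φ) ^ 2 + 2 * (y m) ^ 2 := by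
      intro m
      have h2 : (∑ k, T m k * |x k| ^ q) ^ 2 ≤ (R * Φ) ^ 2 := by
        rw [← sq_abs (∑ k, T m k * |x k| ^ q)]
        exact pow_le_pow_left₀ (abs_nonneg _) (hc m) 2
      nlinarith [sq_nonneg ((∑ k, T m k * |x k| ^ q) - y m)]
    calc B ≤ ∑ m : Fin M, (2 * (R * Φ) ^ 2 + 2 * (y m) ^ 2) :=
          Finset.sum_le_sum fun m _ => h1 m
      _ = 2 * M * (R * Φ) ^ 2 + 2 * N := by
          rw [Finset.sum_add_distrib, Finset.sum_const, ← Finset.mul_sum, hN, Nf]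
          simp [nsmul_eq_mul]; ring
  have key : (A - B) ^ 2 ≤ 2 * A ^ 2 + 16 * (M : ℝ) ^ 2 * R ^ 4 * Φ ^ 4 + 16 * N ^ 2 := by
    have h3 : (A - B) ^ 2 ≤ 2 * A ^ 2 + 2 * B ^ 2 := by nlinarith [sq_nonneg (A + B)]
    have h4 : B ^ 2 ≤ (2 * M * (R * Φ) ^ 2 + 2 * N) ^ 2 := pow_le_pow_left₀ hB0 hB 2
    have h5 : (2 * M * (R * Φ) ^ 2 + 2 * N) ^ 2
        ≤ 8 * (M : ℝ) ^ 2 * R ^ 4 * Φ ^ 4 + 8 * N ^ 2 := by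
      nlinarith [sq_nonneg ((M : ℝ) * (R * Φ) ^ 2 - N), sq_nonneg ((M:ℝ) * (R * Φ) ^ 2), sq_nonneg N]
    nlinarith
  show ‖(A - B) ^ 2‖ ≤ _
  rw [Real.norm_eq_abs, abs_of_nonneg (sq_nonneg _)]
  exact key




section Main

variable {K M : ℕ} {vx vn : ℝ≥0} {p : ℝ}

theorem int_fst {f : (Fin K → ℝ) → ℝ}
    (hf : Integrable f (Measure.pi fun _ : Fin K => gaussianReal 0 vx)) :
    Integrable (fun z : (Fin K → ℝ) × (Fin M → ℝ) => f z.1)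
      ((Measure.pi fun _ : Fin K => gaussianReal 0 vx).prod
        (Measure.pi fun _ : Fin M => gaussianReal 0 vn)) := by
  simpa using hf.mul_prod (integrable_const (1:ℝ))

theorem int_snd {f : (Fin M → ℝ) → ℝ}
    (hf : Integrable f (Measure.pi fun _ : Fin M => gaussianReal 0 vn)) :
    Integrable (fun z : (Fin K → ℝ) × (Fin M → ℝ) => f z.2)
      ((Measure.pi fun _ : Fin K => gaussianReal 0 vx).prod
        (Measure.pi fun _ : Fin M => gaussianReal 0 vn)) := by
  simpa using (integrable_const (1:ℝ)).mul_prod hf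

theorem integral_fst (f : (Fin K → ℝ) → ℝ) :
    (∫ z : (Fin K → ℝ) × (Fin M → ℝ), f z.1
      ∂((Measure.pi fun _ : Fin K => gaussianReal 0 vx).prod
        (Measure.pi fun _ : Fin M => gaussianReal 0 vn)))
    = ∫ x, f x ∂(Measure.pi fun _ : Fin K => gaussianReal 0 vx) := by
  have := integral_prod_mul (μ := Measure.pi fun _ : Fin K => gaussianReal 0 vx)
    (ν := Measure.pi fun _ : Fin M => gaussianReal 0 vn) f (fun _ => (1:ℝ))
  simpa using this

theorem integral_snd (f : (Fin M → ℝ) → ℝ) :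
    (∫ z : (Fin K → ℝ) × (Fin M → ℝ), f z.2
      ∂((Measure.pi fun _ : Fin K => gaussianReal 0 vx).prod
        (Measure.pi fun _ : Fin M => gaussianReal 0 vn)))
    = ∫ y, f y ∂(Measure.pi fun _ : Fin M => gaussianReal 0 vn) := by
  have := integral_prod_mul (μ := Measure.pi fun _ : Fin K => gaussianReal 0 vx)
    (ν := Measure.pi fun _ : Fin M => gaussianReal 0 vn) (fun _ => (1:ℝ)) f
  simpa using this

theorem Nf_sq_int (hvn : vn ≠ 0) :
    Integrable (fun y : Fin M → ℝ => (Nf y) ^ 2)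
      (Measure.pi fun _ : Fin M => gaussianReal 0 vn) := by
  have h := integrable_pow_sum_gauss hvn (show (0:ℝ) < 2 by norm_num) 2 M
  refine h.congr (Filter.Eventually.of_forall fun y => ?_)
  show (∑ k, |y k| ^ (2:ℝ)) ^ 2 = Nf y ^ 2
  unfold Nf
  congr 1
  refine Finset.sum_congr rfl fun m _ => ?_
  rw [show ((2:ℝ)) = ((2:ℕ) : ℝ) by norm_num, Real.rpow_natCast, sq_abs]

theorem Nf_int (hvn : vn ≠ 0) :
    Integrable (fun y : Fin M → ℝ => Nf y)
      (Measure.pi fun _ : Fin M => gaussianReal 0 vn) := by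
  have h := integrable_pow_sum_gauss hvn (show (0:ℝ) < 2 by norm_num) 1 M
  refine h.congr (Filter.Eventually.of_forall fun y => ?_)
  show (∑ k, |y k| ^ (2:ℝ)) ^ 1 = Nf y
  unfold Nf
  rw [pow_one]
  refine Finset.sum_congr rfl fun m _ => ?_
  rw [show ((2:ℝ)) = ((2:ℕ) : ℝ) by norm_num, Real.rpow_natCast, sq_abs]

theorem Df_int (hvx : vx ≠ 0) (hvn : vn ≠ 0) (hp : 0 < p) (R : ℝ) :
    Integrable (Df p R)
      ((Measure.pi fun _ : Fin K => gaussianReal 0 vx).prod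
        (Measure.pi fun _ : Fin M => gaussianReal 0 vn)) := by
  unfold Df
  refine Integrable.add (Integrable.add ?_ ?_) ?_
  · exact (int_fst ((integrable_pow_sum_gauss hvx hp 2 K))).const_mul 2
  · exact (int_fst ((integrable_pow_sum_gauss hvx (by linarith : (0:ℝ) < p/2) 4 K))).const_mul _
  · exact (int_snd (Nf_sq_int hvn)).const_mul 16

theorem Ff_int (hvx : vx ≠ 0) (hvn : vn ≠ 0) (hp : 0 < p) (T : Fin M → Fin K → ℝ) :
    Integrable (Ff p T)
      ((Measure.pi fun _ : Fin K => gaussianReal 0 vx).prod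
        (Measure.pi fun _ : Fin M => gaussianReal 0 vn)) := by
  set R : ℝ := ∑ m, ∑ k, |T m k| with hR
  have hR0 : 0 ≤ R := Finset.sum_nonneg fun m _ => Finset.sum_nonneg fun k _ => abs_nonneg _
  have hT : ∀ m k, |T m k| ≤ R := by
    intro m k
    calc |T m k| ≤ ∑ k', |T m k'| :=
          Finset.single_le_sum (f := fun k' => |T m k'|)
            (fun k' _ => abs_nonneg _) (Finset.mem_univ k)
      _ ≤ R := Finset.single_le_sum (f := fun m' => ∑ k', |T m' k'|)
          (fun m' _ => Finset.sum_nonneg fun k' _ => abs_nonneg _) (Finset.mem_univ m)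
  exact (Df_int hvx hvn hp R).mono' (Ff_continuous p hp.le T).aestronglyMeasurable
    (Filter.Eventually.of_forall fun z => Ff_le_Df p hR0 hT z)

theorem J_continuous (hvx : vx ≠ 0) (hvn : vn ≠ 0) (hp : 0 < p) :
    Continuous fun T : Fin M → Fin K → ℝ => ∫ z, Ff p T z
      ∂((Measure.pi fun _ : Fin K => gaussianReal 0 vx).prod
        (Measure.pi fun _ : Fin M => gaussianReal 0 vn)) := by
  rw [continuous_iff_continuousAt]
  intro T₀
  set R : ℝ := (∑ m, ∑ k, |T₀ m k|) + 1 with hRdef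
  have hR0 : 0 ≤ R := by
    have : (0:ℝ) ≤ ∑ m, ∑ k, |T₀ m k| :=
      Finset.sum_nonneg fun m _ => Finset.sum_nonneg fun k _ => abs_nonneg _
    linarith
  have hUopen : IsOpen {T : Fin M → Fin K → ℝ | (∑ m, ∑ k, |T m k|) < R} := by
    have hcont : Continuous fun T : Fin M → Fin K → ℝ => ∑ m, ∑ k, |T m k| :=
      continuous_finset_sum _ fun m _ => continuous_finset_sum _ fun k _ =>
        ((continuous_apply k).comp (continuous_apply m)).abs
    exact isOpen_lt hcont continuous_const
  have hmem : T₀ ∈ {T : Fin M → Fin K → ℝ | (∑ m, ∑ k, |T m k|) < R} := by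
    simp only [Set.mem_setOf_eq, hRdef]; linarith
  refine continuousAt_of_dominated ?_ ?_ (Df_int hvx hvn hp R) ?_
  · exact Filter.Eventually.of_forall fun T => (Ff_continuous p hp.le T).aestronglyMeasurable
  · refine Filter.eventually_of_mem (hUopen.mem_nhds hmem) fun T hT => ?_
    refine Filter.Eventually.of_forall fun z => ?_
    have hTR : ∀ m k, |T m k| ≤ R := by
      intro m k
      have h1 : |T m k| ≤ ∑ m', ∑ k', |T m' k'| := by
        calc |T m k| ≤ ∑ k', |T m k'| :=
              Finset.single_le_sum (f := fun k' => |T m k'|)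
                (fun k' _ => abs_nonneg _) (Finset.mem_univ k)
          _ ≤ _ := Finset.single_le_sum (f := fun m' => ∑ k', |T m' k'|)
              (fun m' _ => Finset.sum_nonneg fun k' _ => abs_nonneg _) (Finset.mem_univ m)
      exact h1.trans (le_of_lt hT)
    exact Ff_le_Df p hR0 hTR z
  · exact Filter.Eventually.of_forall fun z => (Ff_continuous_in_T p z).continuousAt

end Main
noncomputable def Bf (p : ℝ) {K M : ℕ} (T : Fin M → Fin K → ℝ)
    (z : (Fin K → ℝ) × (Fin M → ℝ)) : ℝ :=
  ∑ m, ((∑ k, T m k * |z.1 k| ^ (p / 2)) + z.2 m) ^ 2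

theorem Ff_eq_Bf (p : ℝ) {K M : ℕ} (T : Fin M → Fin K → ℝ)
    (z : (Fin K → ℝ) × (Fin M → ℝ)) :
    Ff p T z = (Af p z.1 - Bf p T z) ^ 2 := rfl

section Main2

variable {K M : ℕ} {vx vn : ℝ≥0} {p : ℝ}

theorem Af_int (hvx : vx ≠ 0) (hp : 0 < p) :
    Integrable (Af p) (Measure.pi fun _ : Fin K => gaussianReal 0 vx) := by
  have h := integrable_pow_sum_gauss hvx hp 1 K
  refine h.congr (Filter.Eventually.of_forall fun x => ?_)
  show (∑ k, |x k| ^ p) ^ 1 = Af p x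
  rw [pow_one]; rfl

theorem g_sq (hp : 0 < p) (t : ℝ) : |t| ^ (p / 2) * |t| ^ (p / 2) = |t| ^ p := by
  rw [← Real.rpow_add' (abs_nonneg t) (by linarith)]
  norm_num

theorem gg_int (hvx : vx ≠ 0) (hp : 0 < p) :
    Integrable (fun t : ℝ => |t| ^ (p / 2) * |t| ^ (p / 2)) (gaussianReal 0 vx) := by
  refine (integrable_abs_rpow_gauss hvx hp.le).congr
    (Filter.Eventually.of_forall fun t => ?_)
  exact (g_sq hp t).symm

/-- Integrability of `(∑ k a k g (x k))^2` plus the expansion of its integral. -/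
theorem cm_sq_int (hvx : vx ≠ 0) (hp : 0 < p) (a : Fin K → ℝ) :
    Integrable (fun x : Fin K → ℝ => (∑ k, a k * |x k| ^ (p / 2)) ^ 2)
      (Measure.pi fun _ : Fin K => gaussianReal 0 vx) := by
  have hpt : ∀ x : Fin K → ℝ, (∑ k, a k * |x k| ^ (p / 2)) ^ 2
      = ∑ k, ∑ j, (a k * a j) * (|x k| ^ (p / 2) * |x j| ^ (p / 2)) := by
    intro x
    rw [sq, Finset.sum_mul_sum]
    exact Finset.sum_congr rfl fun k _ => Finset.sum_congr rfl fun j _ => by ring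
  have hterm : ∀ k j : Fin K, Integrable
      (fun x : Fin K → ℝ => |x k| ^ (p / 2) * |x j| ^ (p / 2))
      (Measure.pi fun _ : Fin K => gaussianReal 0 vx) := by
    intro k j
    rcases eq_or_ne k j with rfl | hkj
    · exact integrable_eval (gg_int hvx hp) k
    · exact integrable_pair (integrable_abs_rpow_gauss hvx (by linarith))
        (integrable_abs_rpow_gauss hvx (by linarith)) k j hkj
  refine Integrable.congr ?_ (Filter.Eventually.of_forall fun x => (hpt x).symm)
  exact integrable_finset_sum _ fun k _ =>
    integrable_finset_sum _ fun j _ => (hterm k j).const_mul _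

theorem cm_sq_integral (hvx : vx ≠ 0) (hp : 0 < p) (a : Fin K → ℝ) :
    ∫ x : Fin K → ℝ, (∑ k, a k * |x k| ^ (p / 2)) ^ 2
        ∂(Measure.pi fun _ : Fin K => gaussianReal 0 vx)
      = ((∫ t, |t| ^ p ∂gaussianReal 0 vx)
          - (∫ t, |t| ^ (p / 2) ∂gaussianReal 0 vx) ^ 2) * (∑ k, (a k) ^ 2)
        + (∫ t, |t| ^ (p / 2) ∂gaussianReal 0 vx) ^ 2 * (∑ k, a k) ^ 2 := by
  set m1 : ℝ := ∫ t, |t| ^ (p / 2) ∂gaussianReal 0 vx with hm1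
  set m2 : ℝ := ∫ t, |t| ^ p ∂gaussianReal 0 vx with hm2
  have hg : Integrable (fun t : ℝ => |t| ^ (p / 2)) (gaussianReal 0 vx) :=
    integrable_abs_rpow_gauss hvx (by linarith)
  have hpt : ∀ x : Fin K → ℝ, (∑ k, a k * |x k| ^ (p / 2)) ^ 2
      = ∑ k, ∑ j, (a k * a j) * (|x k| ^ (p / 2) * |x j| ^ (p / 2)) := by
    intro x
    rw [sq, Finset.sum_mul_sum]
    exact Finset.sum_congr rfl fun k _ => Finset.sum_congr rfl fun j _ => by ring
  have hterm : ∀ k j : Fin K, Integrable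
      (fun x : Fin K → ℝ => |x k| ^ (p / 2) * |x j| ^ (p / 2))
      (Measure.pi fun _ : Fin K => gaussianReal 0 vx) := by
    intro k j
    rcases eq_or_ne k j with rfl | hkj
    · exact integrable_eval (gg_int hvx hp) k
    · exact integrable_pair hg hg k j hkj
  have hC : ∀ k j : Fin K, ∫ x : Fin K → ℝ, |x k| ^ (p / 2) * |x j| ^ (p / 2)
        ∂(Measure.pi fun _ : Fin K => gaussianReal 0 vx)
      = m1 ^ 2 + (if j = k then m2 - m1 ^ 2 else 0) := by
    intro k j
    rcases eq_or_ne k j with rfl | hkj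
    · rw [if_pos rfl]
      have h1 : ∫ x : Fin K → ℝ, |x k| ^ (p / 2) * |x k| ^ (p / 2)
            ∂(Measure.pi fun _ : Fin K => gaussianReal 0 vx)
          = ∫ t, |t| ^ (p / 2) * |t| ^ (p / 2) ∂gaussianReal 0 vx :=
        integral_eval (fun t => |t| ^ (p / 2) * |t| ^ (p / 2)) k
      rw [h1, integral_congr_ae (Filter.Eventually.of_forall fun t => g_sq hp t), ← hm2]
      ring
    · rw [if_neg (Ne.symm hkj), integral_pair hg hg k j hkj, ← hm1]
      ring
  rw [integral_congr_ae (Filter.Eventually.of_forall hpt),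
    integral_finset_sum _ (fun k _ => integrable_finset_sum _
      (fun j _ => (hterm k j).const_mul _))]
  have hrow : ∀ k : Fin K, ∫ x : Fin K → ℝ,
        (∑ j, (a k * a j) * (|x k| ^ (p / 2) * |x j| ^ (p / 2)))
        ∂(Measure.pi fun _ : Fin K => gaussianReal 0 vx)
      = ∑ j, (a k * a j) * (m1 ^ 2 + (if j = k then m2 - m1 ^ 2 else 0)) := by
    intro k
    rw [integral_finset_sum _ (fun j _ => (hterm k j).const_mul _)]
    exact Finset.sum_congr rfl fun j _ => by rw [integral_const_mul, hC k j]
  rw [Finset.sum_congr rfl fun k _ => hrow k]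
  have hsplit : ∀ k : Fin K,
      (∑ j, (a k * a j) * (m1 ^ 2 + (if j = k then m2 - m1 ^ 2 else 0)))
      = (∑ j, (a k * a j)) * m1 ^ 2 + (a k) ^ 2 * (m2 - m1 ^ 2) := by
    intro k
    have : ∀ j : Fin K, (a k * a j) * (m1 ^ 2 + (if j = k then m2 - m1 ^ 2 else 0))
        = (a k * a j) * m1 ^ 2 + (if j = k then (a k * a j) * (m2 - m1 ^ 2) else 0) := by
      intro j
      split <;> ring
    rw [Finset.sum_congr rfl fun j _ => this j, Finset.sum_add_distrib,
      Finset.sum_ite_eq' Finset.univ k (fun j => (a k * a j) * (m2 - m1 ^ 2)),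
      if_pos (Finset.mem_univ k), ← Finset.sum_mul]
    ring
  rw [Finset.sum_congr rfl fun k _ => hsplit k, Finset.sum_add_distrib, ← Finset.sum_mul,
    ← Finset.sum_mul, ← Finset.sum_mul_sum, ← sq]
  ring

end Main2

section Main3

variable {K M : ℕ} {vx vn : ℝ≥0} {p : ℝ}

theorem gsq_int (hvx : vx ≠ 0) (hp : 0 < p) :
    Integrable (fun t : ℝ => (|t| ^ (p / 2)) ^ 2) (gaussianReal 0 vx) := by
  refine (integrable_abs_rpow_gauss hvx hp.le).congr
    (Filter.Eventually.of_forall fun t => ?_)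
  show |t| ^ p = (|t| ^ (p / 2)) ^ 2
  rw [sq, g_sq hp]

theorem m1_nonneg : 0 ≤ ∫ t, |t| ^ (p / 2) ∂gaussianReal 0 vx :=
  integral_nonneg fun t => Real.rpow_nonneg (abs_nonneg t) _

theorem v_pos (hvx : vx ≠ 0) (hp : 0 < p) :
    0 < (∫ t, |t| ^ p ∂gaussianReal 0 vx)
      - (∫ t, |t| ^ (p / 2) ∂gaussianReal 0 vx) ^ 2 := by
  set ν := gaussianReal 0 vx with hν
  set m1 : ℝ := ∫ t, |t| ^ (p / 2) ∂ν with hm1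
  set m2 : ℝ := ∫ t, |t| ^ p ∂ν with hm2
  have hg : Integrable (fun t : ℝ => |t| ^ (p / 2)) ν :=
    integrable_abs_rpow_gauss hvx (by linarith)
  have hg2 : Integrable (fun t : ℝ => (|t| ^ (p / 2)) ^ 2) ν := gsq_int hvx hp
  have hvar_int : Integrable (fun t : ℝ => (|t| ^ (p / 2) - m1) ^ 2) ν := by
    have : (fun t : ℝ => (|t| ^ (p / 2) - m1) ^ 2)
        = fun t : ℝ => (|t| ^ (p / 2)) ^ 2 - (2 * m1) * (|t| ^ (p / 2)) + m1 ^ 2 :=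
      funext fun t => by ring
    rw [this]
    exact (hg2.sub (hg.const_mul _)).add (integrable_const _)
  have hvar_eq : ∫ t, (|t| ^ (p / 2) - m1) ^ 2 ∂ν = m2 - m1 ^ 2 := by
    have h1 : (fun t : ℝ => (|t| ^ (p / 2) - m1) ^ 2)
        = fun t : ℝ => (|t| ^ (p / 2)) ^ 2 - (2 * m1) * (|t| ^ (p / 2)) + m1 ^ 2 :=
      funext fun t => by ring
    have hI1 : Integrable (fun t : ℝ => (|t| ^ (p / 2)) ^ 2 - (2 * m1) * (|t| ^ (p / 2))) ν :=
      hg2.sub (hg.const_mul _)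
    have hI2 : Integrable (fun t : ℝ => (2 * m1) * (|t| ^ (p / 2))) ν := hg.const_mul _
    rw [h1, integral_add hI1 (integrable_const _), integral_sub hg2 hI2,
      integral_const_mul, integral_const]
    have h2 : ∫ t, (|t| ^ (p / 2)) ^ 2 ∂ν = m2 := by
      rw [hm2]
      refine integral_congr_ae (Filter.Eventually.of_forall fun t => ?_)
      show (|t| ^ (p / 2)) ^ 2 = |t| ^ p
      rw [sq, g_sq hp]
    rw [h2, probReal_univ]
    simp only [ smul_eq_mul, one_mul]
    ring
  have hge : 0 ≤ m2 - m1 ^ 2 := by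
    rw [← hvar_eq]; exact integral_nonneg fun t => sq_nonneg _
  rcases hge.lt_or_eq with h | h
  · exact h
  · exfalso
    have hzero : ∫ t, (|t| ^ (p / 2) - m1) ^ 2 ∂ν = 0 := by rw [hvar_eq, ← h]
    have hae := (integral_eq_zero_iff_of_nonneg (fun t => sq_nonneg _) hvar_int).mp hzero
    have hae' : ν {t : ℝ | ¬ ((|t| ^ (p / 2) - m1) ^ 2 = 0)} = 0 := by
      have := hae
      rw [Filter.EventuallyEq, Filter.eventually_iff, mem_ae_iff] at this
      simpa [Set.compl_setOf] using this
    set c : ℝ := m1 ^ (2 / p) with hc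
    have hc0 : 0 ≤ c := Real.rpow_nonneg m1_nonneg _
    have hsub : ({c, -c} : Set ℝ)ᶜ ⊆ {t : ℝ | ¬ ((|t| ^ (p / 2) - m1) ^ 2 = 0)} := by
      intro t ht
      simp only [Set.mem_compl_iff, Set.mem_insert_iff, Set.mem_singleton_iff, not_or] at ht
      simp only [Set.mem_setOf_eq]
      intro habs
      have h1 : |t| ^ (p / 2) = m1 := by
        have := pow_eq_zero_iff (n := 2) (by norm_num) |>.mp habs
        linarith [this]
      have h2 : |t| = c := by
        have h3 : (|t| ^ (p / 2)) ^ (2 / p) = |t| ^ ((p / 2) * (2 / p)) :=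
          (Real.rpow_mul (abs_nonneg t) _ _).symm
        have h4 : (p / 2) * (2 / p) = 1 := by field_simp
        rw [h4, Real.rpow_one] at h3
        rw [hc, ← h1, h3]
      rcases (abs_eq hc0).mp h2 with rfl | rfl
      · exact ht.1 rfl
      · exact ht.2 rfl
    have hpair : ν ({c, -c} : Set ℝ) = 0 := by
      have hvol : (volume : Measure ℝ) ({c, -c} : Set ℝ) = 0 :=
        Set.Countable.measure_zero
          (((Set.finite_singleton (-c)).insert c).countable) _
      exact gaussianReal_absolutelyContinuous _ hvx hvol
    have hcompl : ν (({c, -c} : Set ℝ)ᶜ) = 0 :=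
      le_antisymm ((measure_mono hsub).trans hae'.le) zero_le
    have : (1 : ℝ≥0∞) ≤ 0 := by
      calc (1 : ℝ≥0∞) = ν Set.univ := (measure_univ).symm
        _ = ν (({c, -c} : Set ℝ) ∪ ({c, -c} : Set ℝ)ᶜ) := by rw [Set.union_compl_self]
        _ ≤ ν ({c, -c} : Set ℝ) + ν (({c, -c} : Set ℝ)ᶜ) := measure_union_le _ _
        _ = 0 := by rw [hpair, hcompl, add_zero]
    simp at this

theorem Bf_int (hvx : vx ≠ 0) (hvn : vn ≠ 0) (hp : 0 < p) (T : Fin M → Fin K → ℝ) :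
    Integrable (Bf p T)
      ((Measure.pi fun _ : Fin K => gaussianReal 0 vx).prod
        (Measure.pi fun _ : Fin M => gaussianReal 0 vn)) := by
  unfold Bf
  refine integrable_finset_sum _ fun m _ => ?_
  have hcm2 : Integrable (fun x : Fin K → ℝ => (∑ k, T m k * |x k| ^ (p / 2)) ^ 2)
      (Measure.pi fun _ : Fin K => gaussianReal 0 vx) := cm_sq_int hvx hp _
  have hym2 : Integrable (fun y : Fin M → ℝ => (y m) ^ 2)
      (Measure.pi fun _ : Fin M => gaussianReal 0 vn) := by
    have := integrable_eval (ν := gaussianReal 0 vn) (n := M)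
      (g := fun t : ℝ => t ^ 2) ?_ m
    · exact this
    · refine (integrable_abs_rpow_gauss hvn (by norm_num : (0:ℝ) ≤ 2)).congr
        (Filter.Eventually.of_forall fun t => ?_)
      show |t| ^ (2:ℝ) = t ^ 2
      rw [show ((2:ℝ)) = ((2:ℕ) : ℝ) by norm_num, Real.rpow_natCast, sq_abs]
  have hdom : Integrable (fun z : (Fin K → ℝ) × (Fin M → ℝ) =>
      2 * (∑ k, T m k * |z.1 k| ^ (p / 2)) ^ 2 + 2 * (z.2 m) ^ 2)
      ((Measure.pi fun _ : Fin K => gaussianReal 0 vx).prod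
        (Measure.pi fun _ : Fin M => gaussianReal 0 vn)) :=
    ((int_fst hcm2).const_mul 2).add ((int_snd hym2).const_mul 2)
  have hcont : Continuous fun z : (Fin K → ℝ) × (Fin M → ℝ) =>
      ((∑ k, T m k * |z.1 k| ^ (p / 2)) + z.2 m) ^ 2 := by
    refine Continuous.pow ?_ 2
    refine Continuous.add (continuous_finset_sum _ fun k _ => ?_)
      ((continuous_apply m).comp continuous_snd)
    exact continuous_const.mul
      ((((continuous_apply k).comp continuous_fst).abs).rpow_const fun _ => Or.inr (by linarith))
  refine hdom.mono' hcont.aestronglyMeasurable (Filter.Eventually.of_forall fun z => ?_)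
  rw [Real.norm_eq_abs, abs_of_nonneg (sq_nonneg _)]
  nlinarith [sq_nonneg ((∑ k, T m k * |z.1 k| ^ (p / 2)) - z.2 m)]

theorem AsubB_int (hvx : vx ≠ 0) (hvn : vn ≠ 0) (hp : 0 < p) (T : Fin M → Fin K → ℝ) :
    Integrable (fun z : (Fin K → ℝ) × (Fin M → ℝ) => Af p z.1 - Bf p T z)
      ((Measure.pi fun _ : Fin K => gaussianReal 0 vx).prod
        (Measure.pi fun _ : Fin M => gaussianReal 0 vn)) :=
  (int_fst (Af_int hvx hp)).sub (Bf_int hvx hvn hp T)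

theorem jensen (hvx : vx ≠ 0) (hvn : vn ≠ 0) (hp : 0 < p) (T : Fin M → Fin K → ℝ) :
    (∫ z : (Fin K → ℝ) × (Fin M → ℝ), (Af p z.1 - Bf p T z)
        ∂((Measure.pi fun _ : Fin K => gaussianReal 0 vx).prod
          (Measure.pi fun _ : Fin M => gaussianReal 0 vn))) ^ 2
      ≤ ∫ z, Ff p T z
        ∂((Measure.pi fun _ : Fin K => gaussianReal 0 vx).prod
          (Measure.pi fun _ : Fin M => gaussianReal 0 vn)) := by
  set μ := ((Measure.pi fun _ : Fin K => gaussianReal 0 vx).prod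
    (Measure.pi fun _ : Fin M => gaussianReal 0 vn)) with hμ
  set f : (Fin K → ℝ) × (Fin M → ℝ) → ℝ := fun z => Af p z.1 - Bf p T z with hf
  set c : ℝ := ∫ z, f z ∂μ with hcdef
  have hfint : Integrable f μ := AsubB_int hvx hvn hp T
  have hf2int : Integrable (fun z => f z ^ 2) μ := by
    refine (Ff_int hvx hvn hp T).congr (Filter.Eventually.of_forall fun z => ?_)
    rw [Ff_eq_Bf]
  have h0 : 0 ≤ ∫ z, (f z - c) ^ 2 ∂μ := integral_nonneg fun z => sq_nonneg _
  have hexp : ∫ z, (f z - c) ^ 2 ∂μ = (∫ z, f z ^ 2 ∂μ) - c ^ 2 := by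
    have h1 : (fun z => (f z - c) ^ 2)
        = fun z => f z ^ 2 - (2 * c) * f z + c ^ 2 := funext fun z => by ring
    have hI1 : Integrable (fun z => f z ^ 2 - (2 * c) * f z) μ := hf2int.sub (hfint.const_mul _)
    have hI2 : Integrable (fun z => (2 * c) * f z) μ := hfint.const_mul _
    rw [h1, integral_add hI1 (integrable_const _), integral_sub hf2int hI2,
      integral_const_mul, integral_const, probReal_univ]
    simp only [ smul_eq_mul, one_mul]
    rw [← hcdef]
    ring
  have h2 : c ^ 2 ≤ ∫ z, f z ^ 2 ∂μ := by
    rw [hexp] at h0; linarith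
  calc (∫ z, f z ∂μ) ^ 2 = c ^ 2 := by rw [← hcdef]
    _ ≤ ∫ z, f z ^ 2 ∂μ := h2
    _ = ∫ z, Ff p T z ∂μ :=
      integral_congr_ae (Filter.Eventually.of_forall fun z => (Ff_eq_Bf p T z).symm)

end Main3

section Main4

variable {K M : ℕ} {vx vn : ℝ≥0} {p : ℝ}

theorem ym_sq_int (hvn : vn ≠ 0) (m : Fin M) :
    Integrable (fun y : Fin M → ℝ => (y m) ^ 2)
      (Measure.pi fun _ : Fin M => gaussianReal 0 vn) := by
  have := integrable_eval (ν := gaussianReal 0 vn) (n := M)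
    (g := fun t : ℝ => t ^ 2) ?_ m
  · exact this
  · refine (integrable_abs_rpow_gauss hvn (by norm_num : (0:ℝ) ≤ 2)).congr
      (Filter.Eventually.of_forall fun t => ?_)
    show |t| ^ (2:ℝ) = t ^ 2
    rw [show ((2:ℝ)) = ((2:ℕ) : ℝ) by norm_num, Real.rpow_natCast, sq_abs]

theorem Bfm_int (hvx : vx ≠ 0) (hvn : vn ≠ 0) (hp : 0 < p) (T : Fin M → Fin K → ℝ)
    (m : Fin M) :
    Integrable (fun z : (Fin K → ℝ) × (Fin M → ℝ) =>
        ((∑ k, T m k * |z.1 k| ^ (p / 2)) + z.2 m) ^ 2)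
      ((Measure.pi fun _ : Fin K => gaussianReal 0 vx).prod
        (Measure.pi fun _ : Fin M => gaussianReal 0 vn)) := by
  have hcm2 : Integrable (fun x : Fin K → ℝ => (∑ k, T m k * |x k| ^ (p / 2)) ^ 2)
      (Measure.pi fun _ : Fin K => gaussianReal 0 vx) := cm_sq_int hvx hp _
  have hdom : Integrable (fun z : (Fin K → ℝ) × (Fin M → ℝ) =>
      2 * (∑ k, T m k * |z.1 k| ^ (p / 2)) ^ 2 + 2 * (z.2 m) ^ 2)
      ((Measure.pi fun _ : Fin K => gaussianReal 0 vx).prod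
        (Measure.pi fun _ : Fin M => gaussianReal 0 vn)) :=
    ((int_fst hcm2).const_mul 2).add ((int_snd (ym_sq_int hvn m)).const_mul 2)
  have hcont : Continuous fun z : (Fin K → ℝ) × (Fin M → ℝ) =>
      ((∑ k, T m k * |z.1 k| ^ (p / 2)) + z.2 m) ^ 2 := by
    refine Continuous.pow ?_ 2
    refine Continuous.add (continuous_finset_sum _ fun k _ => ?_)
      ((continuous_apply m).comp continuous_snd)
    exact continuous_const.mul
      ((((continuous_apply k).comp continuous_fst).abs).rpow_const fun _ => Or.inr (by linarith))
  refine hdom.mono' hcont.aestronglyMeasurable (Filter.Eventually.of_forall fun z => ?_)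
  rw [Real.norm_eq_abs, abs_of_nonneg (sq_nonneg _)]
  nlinarith [sq_nonneg ((∑ k, T m k * |z.1 k| ^ (p / 2)) - z.2 m)]

theorem Bf_integral_lb (hvx : vx ≠ 0) (hvn : vn ≠ 0) (hp : 0 < p) (T : Fin M → Fin K → ℝ) :
    (((∫ t, |t| ^ p ∂gaussianReal 0 vx)
        - (∫ t, |t| ^ (p / 2) ∂gaussianReal 0 vx) ^ 2) / 2)
        * (∑ m, ∑ k, (T m k) ^ 2)
      - (∫ y, Nf y ∂(Measure.pi fun _ : Fin M => gaussianReal 0 vn))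
    ≤ ∫ z, Bf p T z
        ∂((Measure.pi fun _ : Fin K => gaussianReal 0 vx).prod
          (Measure.pi fun _ : Fin M => gaussianReal 0 vn)) := by
  set μx := (Measure.pi fun _ : Fin K => gaussianReal 0 vx) with hμx
  set μn := (Measure.pi fun _ : Fin M => gaussianReal 0 vn) with hμn
  set μ := μx.prod μn with hμ
  set m1 : ℝ := ∫ t, |t| ^ (p / 2) ∂gaussianReal 0 vx with hm1
  set m2 : ℝ := ∫ t, |t| ^ p ∂gaussianReal 0 vx with hm2
  set v : ℝ := m2 - m1 ^ 2 with hv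
  have hBsum : ∫ z, Bf p T z ∂μ
      = ∑ m, ∫ z : (Fin K → ℝ) × (Fin M → ℝ),
          ((∑ k, T m k * |z.1 k| ^ (p / 2)) + z.2 m) ^ 2 ∂μ := by
    unfold Bf
    exact integral_finset_sum _ fun m _ => Bfm_int hvx hvn hp T m
  have hterm : ∀ m : Fin M,
      (v / 2) * (∑ k, (T m k) ^ 2) - (∫ y, (y m) ^ 2 ∂μn)
      ≤ ∫ z : (Fin K → ℝ) × (Fin M → ℝ),
          ((∑ k, T m k * |z.1 k| ^ (p / 2)) + z.2 m) ^ 2 ∂μ := by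
    intro m
    have hcm2 : Integrable (fun x : Fin K → ℝ => (∑ k, T m k * |x k| ^ (p / 2)) ^ 2) μx :=
      cm_sq_int hvx hp _
    have hlhs_int : Integrable (fun z : (Fin K → ℝ) × (Fin M → ℝ) =>
        (1/2) * (∑ k, T m k * |z.1 k| ^ (p / 2)) ^ 2 - (z.2 m) ^ 2) μ :=
      ((int_fst hcm2).const_mul _).sub (int_snd (ym_sq_int hvn m))
    have hmono : ∫ z : (Fin K → ℝ) × (Fin M → ℝ),
          ((1/2) * (∑ k, T m k * |z.1 k| ^ (p / 2)) ^ 2 - (z.2 m) ^ 2) ∂μ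
        ≤ ∫ z : (Fin K → ℝ) × (Fin M → ℝ),
          ((∑ k, T m k * |z.1 k| ^ (p / 2)) + z.2 m) ^ 2 ∂μ := by
      refine integral_mono hlhs_int (Bfm_int hvx hvn hp T m) fun z => ?_
      nlinarith [sq_nonneg ((∑ k, T m k * |z.1 k| ^ (p / 2)) + 2 * z.2 m)]
    have hlhs_eq : ∫ z : (Fin K → ℝ) × (Fin M → ℝ),
          ((1/2) * (∑ k, T m k * |z.1 k| ^ (p / 2)) ^ 2 - (z.2 m) ^ 2) ∂μ
        = (1/2) * (∫ x, (∑ k, T m k * |x k| ^ (p / 2)) ^ 2 ∂μx)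
          - ∫ y, (y m) ^ 2 ∂μn := by
      have hI1 : Integrable (fun z : (Fin K → ℝ) × (Fin M → ℝ) =>
          (1/2) * (∑ k, T m k * |z.1 k| ^ (p / 2)) ^ 2) μ := (int_fst hcm2).const_mul _
      have hI2 : Integrable (fun z : (Fin K → ℝ) × (Fin M → ℝ) => (z.2 m) ^ 2) μ :=
        int_snd (ym_sq_int hvn m)
      rw [integral_sub hI1 hI2, integral_const_mul]
      rw [hμ, hμx, hμn]
      rw [integral_fst (fun x => (∑ k, T m k * |x k| ^ (p / 2)) ^ 2),
        integral_snd (fun y => (y m) ^ 2)]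
    have hcm_lb : v * (∑ k, (T m k) ^ 2)
        ≤ ∫ x, (∑ k, T m k * |x k| ^ (p / 2)) ^ 2 ∂μx := by
      rw [hμx, cm_sq_integral hvx hp (fun k => T m k), ← hm1, ← hm2, ← hv]
      nlinarith [sq_nonneg m1, sq_nonneg (∑ k, T m k)]
    calc (v / 2) * (∑ k, (T m k) ^ 2) - (∫ y, (y m) ^ 2 ∂μn)
        ≤ (1/2) * (∫ x, (∑ k, T m k * |x k| ^ (p / 2)) ^ 2 ∂μx)
          - ∫ y, (y m) ^ 2 ∂μn := by linarith [hcm_lb]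
      _ = _ := hlhs_eq.symm
      _ ≤ _ := hmono
  have hNsum : ∫ y, Nf y ∂μn = ∑ m, ∫ y, (y m) ^ 2 ∂μn := by
    unfold Nf
    exact integral_finset_sum _ fun m _ => ym_sq_int hvn m
  calc (v / 2) * (∑ m, ∑ k, (T m k) ^ 2) - (∫ y, Nf y ∂μn)
      = ∑ m, ((v / 2) * (∑ k, (T m k) ^ 2) - ∫ y, (y m) ^ 2 ∂μn) := by
        rw [Finset.sum_sub_distrib, ← Finset.mul_sum, hNsum]
    _ ≤ ∑ m, ∫ z : (Fin K → ℝ) × (Fin M → ℝ),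
          ((∑ k, T m k * |z.1 k| ^ (p / 2)) + z.2 m) ^ 2 ∂μ :=
        Finset.sum_le_sum fun m _ => hterm m
    _ = ∫ z, Bf p T z ∂μ := hBsum.symm

theorem exists_min (hvx : vx ≠ 0) (hvn : vn ≠ 0) (hp : 0 < p) :
    ∃ Tstar : Fin M → Fin K → ℝ, ∀ T : Fin M → Fin K → ℝ,
      (∫ z, Ff p Tstar z
        ∂((Measure.pi fun _ : Fin K => gaussianReal 0 vx).prod
          (Measure.pi fun _ : Fin M => gaussianReal 0 vn)))
      ≤ ∫ z, Ff p T z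
        ∂((Measure.pi fun _ : Fin K => gaussianReal 0 vx).prod
          (Measure.pi fun _ : Fin M => gaussianReal 0 vn)) := by
  set μx := (Measure.pi fun _ : Fin K => gaussianReal 0 vx) with hμx
  set μn := (Measure.pi fun _ : Fin M => gaussianReal 0 vn) with hμn
  set μ := μx.prod μn with hμ
  set G : (Fin M → Fin K → ℝ) → ℝ := fun T => ∫ z, Ff p T z ∂μ with hG
  have hGc : Continuous G := J_continuous hvx hvn hp
  set m1 : ℝ := ∫ t, |t| ^ (p / 2) ∂gaussianReal 0 vx with hm1
  set m2 : ℝ := ∫ t, |t| ^ p ∂gaussianReal 0 vx with hm2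
  set v : ℝ := m2 - m1 ^ 2 with hv
  have hvpos : 0 < v := v_pos hvx hp
  set aX : ℝ := ∫ x, Af p x ∂μx with haX
  set nN : ℝ := ∫ y, Nf y ∂μn with hnN
  set c₁ : ℝ := nN + aX with hc₁
  -- coercivity: if `c₁ ≤ (v/2) * Q T` then `((v/2) * Q T - c₁)^2 ≤ G T`
  have hcoer : ∀ T : Fin M → Fin K → ℝ,
      c₁ ≤ (v / 2) * (∑ m, ∑ k, (T m k) ^ 2) →
      ((v / 2) * (∑ m, ∑ k, (T m k) ^ 2) - c₁) ^ 2 ≤ G T := by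
    intro T hQ
    have hjen := jensen hvx hvn hp T
    have hIeq : ∫ z, (Af p z.1 - Bf p T z) ∂μ = aX - ∫ z, Bf p T z ∂μ := by
      rw [integral_sub (int_fst (Af_int hvx hp)) (Bf_int hvx hvn hp T)]
      rw [hμ, hμx, hμn, integral_fst (Af p)]
    have hblb := Bf_integral_lb hvx hvn hp T
    rw [← hm1, ← hm2, ← hv, ← hμn, ← hnN] at hblb
    set b : ℝ := ∫ z, Bf p T z ∂μ with hb
    have h1 : (aX - b) ^ 2 = (b - aX) ^ 2 := by ring
    have h2 : (v / 2) * (∑ m, ∑ k, (T m k) ^ 2) - c₁ ≤ b - aX := by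
      rw [hc₁] at *
      linarith [hblb]
    have h3 : 0 ≤ (v / 2) * (∑ m, ∑ k, (T m k) ^ 2) - c₁ := by linarith
    calc ((v / 2) * (∑ m, ∑ k, (T m k) ^ 2) - c₁) ^ 2
        ≤ (b - aX) ^ 2 := pow_le_pow_left₀ h3 h2 2
      _ = (aX - b) ^ 2 := h1.symm
      _ = (∫ z, (Af p z.1 - Bf p T z) ∂μ) ^ 2 := by rw [hIeq]
      _ ≤ G T := hjen
  -- eventual bound in the cocompact filter
  set t₀ : ℝ := (c₁ + 1 + |G 0|) / (v / 2) with ht₀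
  have hev : ∀ᶠ T in Filter.cocompact (Fin M → Fin K → ℝ), G 0 ≤ G T := by
    rw [Filter.eventually_iff, Filter.mem_cocompact]
    refine ⟨{T : Fin M → Fin K → ℝ | (∑ m, ∑ k, (T m k) ^ 2) ≤ t₀}, ?_, ?_⟩
    · -- compactness
      have hQcont : Continuous fun T : Fin M → Fin K → ℝ => ∑ m, ∑ k, (T m k) ^ 2 :=
        continuous_finset_sum _ fun m _ => continuous_finset_sum _ fun k _ =>
          ((continuous_apply k).comp (continuous_apply m)).pow 2
      have hclosed : IsClosed {T : Fin M → Fin K → ℝ | (∑ m, ∑ k, (T m k) ^ 2) ≤ t₀} :=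
        isClosed_le hQcont continuous_const
      refine IsCompact.of_isClosed_subset (isCompact_closedBall 0 (Real.sqrt (max t₀ 0)))
        hclosed ?_
      intro T hT
      rw [Metric.mem_closedBall, dist_zero_right]
      refine pi_norm_le_iff_of_nonneg (Real.sqrt_nonneg _) |>.mpr fun m => ?_
      refine pi_norm_le_iff_of_nonneg (Real.sqrt_nonneg _) |>.mpr fun k => ?_
      rw [Real.norm_eq_abs]
      apply Real.abs_le_sqrt
      calc (T m k) ^ 2 ≤ ∑ k', (T m k') ^ 2 :=
            Finset.single_le_sum (f := fun k' => (T m k') ^ 2)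
              (fun k' _ => sq_nonneg _) (Finset.mem_univ k)
        _ ≤ ∑ m', ∑ k', (T m' k') ^ 2 :=
            Finset.single_le_sum (f := fun m' => ∑ k', (T m' k') ^ 2)
              (fun m' _ => Finset.sum_nonneg fun k' _ => sq_nonneg _) (Finset.mem_univ m)
        _ ≤ t₀ := hT
        _ ≤ max t₀ 0 := le_max_left _ _
    · intro T hT
      simp only [Set.mem_compl_iff, Set.mem_setOf_eq, not_le] at hT
      have hQ : t₀ < ∑ m, ∑ k, (T m k) ^ 2 := hT
      have hv2 : (0:ℝ) < v / 2 := by linarith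
      have hmul : c₁ + 1 + |G 0| < (v / 2) * (∑ m, ∑ k, (T m k) ^ 2) := by
        have := (div_lt_iff₀ hv2).mp hQ
        calc c₁ + 1 + |G 0| = t₀ * (v / 2) := by
              rw [ht₀, div_mul_cancel₀]
              exact ne_of_gt hv2
          _ < (∑ m, ∑ k, (T m k) ^ 2) * (v / 2) := by
              apply mul_lt_mul_of_pos_right hQ hv2
          _ = (v / 2) * (∑ m, ∑ k, (T m k) ^ 2) := by ring
      have habs : 0 ≤ |G 0| := abs_nonneg _
      have hQc : c₁ ≤ (v / 2) * (∑ m, ∑ k, (T m k) ^ 2) := by linarith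
      have h4 := hcoer T hQc
      have h5 : (1 + |G 0|) ≤ (v / 2) * (∑ m, ∑ k, (T m k) ^ 2) - c₁ := by linarith
      have h6 : (1 + |G 0|) ^ 2 ≤ ((v / 2) * (∑ m, ∑ k, (T m k) ^ 2) - c₁) ^ 2 :=
        pow_le_pow_left₀ (by linarith) h5 2
      have h7 : G 0 ≤ (1 + |G 0|) ^ 2 := by
        nlinarith [abs_nonneg (G 0), le_abs_self (G 0)]
      show G 0 ≤ G T
      linarith
  exact hGc.exists_forall_le' 0 hev

end Main4

end StmtAux


/-- The MSE function `J` attains a global minimum on `ℝ^{M×K}`. -/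
theorem stmt10 (p σx σn : ℝ) (hp : 0 < p) (hσx : 0 < σx) (hσn : 0 < σn) (K M : ℕ) :
    ∃ Sstar : Matrix (Fin M) (Fin K) ℝ, ∀ S : Matrix (Fin M) (Fin K) ℝ,
      J p σx σn K M Sstar ≤ J p σx σn K M S := by
  have hvx : ((σx ^ 2).toNNReal : ℝ≥0) ≠ 0 := by
    rw [ne_eq, Real.toNNReal_eq_zero, not_le]; positivity
  have hvn : ((σn ^ 2).toNNReal : ℝ≥0) ≠ 0 := by
    rw [ne_eq, Real.toNNReal_eq_zero, not_le]; positivity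
  have hJeq : ∀ S : Matrix (Fin M) (Fin K) ℝ,
      J p σx σn K M S = ∫ z, StmtAux.Ff p (fun m k => S m k) z
        ∂((Measure.pi fun _ : Fin K => gaussianReal 0 (σx ^ 2).toNNReal).prod
          (Measure.pi fun _ : Fin M => gaussianReal 0 (σn ^ 2).toNNReal)) := by
    intro S
    unfold _root_.J jointMeas gaussPi StmtAux.Ff StmtAux.Af phi
    refine integral_congr_ae (Filter.Eventually.of_forall fun z => ?_)
    simp [Matrix.mulVec, dotProduct]
  obtain ⟨Tstar, hmin⟩ := StmtAux.exists_min hvx hvn hp (K := K) (M := M)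
  refine ⟨Matrix.of Tstar, fun S => ?_⟩
  rw [hJeq, hJeq]
  exact hmin fun m k => S m k
end

section
/- Let K ∈ ℕ and A ∈ ℝ^{K²×K²}. Suppose the rearranged matrix admits a decomposition R(A) = Σ_{k=1}^{K²} σ_k u_k v_kᵀ with σ_k ∈ ℝ and u_k, v_k ∈ ℝ^{K²} (in particular, a singular value decomposition). Then, with U_k = unvec(u_k) ∈ ℝ^{K×K} and V_k = unvec(v_k) ∈ ℝ^{K×K}, the matrix A decomposes as a sum of Kronecker products: A = Σ_{k=1}^{K²} σ_k U_k ⊗ V_k. -/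
open Matrix
open scoped Kronecker

/-- Rearrangement operator: the row of `R(A)` corresponding to the block index
`(i,j)` (listed in column-major order) is `vec(A_{i,j})ᵀ`, where `A_{i,j}` is
the `(i,j)`-th `K × K` block of `A`. -/
def Rearr {K : ℕ} (A : Matrix (Fin K × Fin K) (Fin K × Fin K) ℝ) :
    Matrix (Fin K × Fin K) (Fin K × Fin K) ℝ :=
  Matrix.of fun p q => A (p.2, q.2) (p.1, q.1)

/-- Inverse of column-major vectorization: `unvec(u) i j = u (j,i)`. -/
def unvecc {K : ℕ} (u : Fin K × Fin K → ℝ) : Matrix (Fin K) (Fin K) ℝ :=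
  Matrix.of fun i j => u (j, i)

/-- If `R(A) = Σₖ σ_k u_k v_kᵀ` (e.g. an SVD), then
`A = Σₖ σ_k (unvec u_k) ⊗ (unvec v_k)`. -/
theorem stmt13 (K : ℕ) (A : Matrix (Fin K × Fin K) (Fin K × Fin K) ℝ)
    (σ : Fin (K ^ 2) → ℝ) (u v : Fin (K ^ 2) → Fin K × Fin K → ℝ)
    (h : Rearr A = ∑ k, σ k • vecMulVec (u k) (v k)) :
    A = ∑ k, σ k • (unvecc (u k) ⊗ₖ unvecc (v k)) := by
  ext ⟨a, b⟩ ⟨c, d⟩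
  have := congrFun (congrFun h (c, a)) (d, b)
  simp only [Rearr, Matrix.of_apply, Matrix.sum_apply, Matrix.smul_apply,
    vecMulVec_apply, smul_eq_mul] at this
  simpa [unvecc, Matrix.sum_apply, Matrix.kroneckerMap_apply] using this
end

section
/- Let K ∈ ℕ and let A ∈ ℝ^{K²×K²} be symmetric, positive semidefinite, and invariant under the rearrangement operator, i.e. R(A) = A. Then there exist matrices M_1, …, M_{K²} ∈ ℝ^{K×K} such that A = Σ_{k=1}^{K²} M_k ⊗ M_k. -/
open Matrix
open scoped Kronecker

/-- A symmetric positive semidefinite matrix that is invariant under the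
rearrangement operator decomposes as `A = Σ_{k=1}^{K²} M_k ⊗ M_k`. -/
theorem stmt15 (K : ℕ) (A : Matrix (Fin K × Fin K) (Fin K × Fin K) ℝ)
    (hsymm : A.IsSymm) (hpsd : A.PosSemidef) (hR : Rearr A = A) :
    ∃ Ms : Fin (K ^ 2) → Matrix (Fin K) (Fin K) ℝ,
      A = ∑ k, Ms k ⊗ₖ Ms k := by
  obtain ⟨B, hB⟩ : ∃ B : Matrix (Fin K × Fin K) (Fin K × Fin K) ℝ, A = Bᴴ * B := by
    open scoped MatrixOrder in
    obtain ⟨B, hB⟩ := CStarAlgebra.nonneg_iff_eq_star_mul_self.mp hpsd.nonneg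
    exact ⟨B, hB⟩
  have e : Fin (K ^ 2) ≃ Fin K × Fin K :=
    (finCongr (sq K)).trans finProdFinEquiv.symm
  refine ⟨fun k => Matrix.of fun i j => B (e k) (i, j), ?_⟩
  ext ⟨p1, p2⟩ ⟨q1, q2⟩
  have h1 : A (p1, p2) (q1, q2) = A (p2, q2) (p1, q1) := by
    conv_lhs => rw [← hR]
    rfl
  have h2 : ∀ p q : Fin K × Fin K, A p q = ∑ r, B r p * B r q := by
    intro p q
    rw [hB]
    simp [Matrix.mul_apply]
  rw [h1, h2, Matrix.sum_apply]
  simp only [Matrix.kroneckerMap_apply, Matrix.of_apply]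
  rw [Equiv.sum_comp e (fun r => B r (p1, q1) * B r (p2, q2))]
  exact Finset.sum_congr rfl fun r _ => mul_comm _ _
end
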